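/- Let b > 0 and c be real numbers, let N be a positive integer, let g : (0,b] → ℝ be continuous, and let γ : (0,b] → ℝ be continuously differentiable. Define f(x) := x^{N−1} · [ (b·γ(b) − c)/b^N − ∫_x^b (d/dy)(y·γ(y)) / y^N dy + N·∫_x^b g(y)/y^N dy ] for x ∈ (0,b]. Then f is continuous on (0,b] and satisfies f(x) + (N/x)·∫_x^b [f(y) − g(y)] dy + c/x = γ(x) for all x ∈ (0,b]. -/

import Mathlib

open MeasureTheory intervalIntegral

/-- Continuity of `t ↦ ∫_t^b h` on `[a,b]` for `h` continuous on `(0,b]`. -/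
lemma volterra_primCont {b : ℝ} (h : ℝ → ℝ) (hh : ContinuousOn h (Set.Ioc 0 b))
    {a : ℝ} (ha : 0 < a) (hab : a ≤ b) :
    ContinuousOn (fun t => ∫ y in t..b, h y) (Set.Icc a b) := by
  have hs : Set.Icc a b ⊆ Set.Ioc 0 b := fun y hy => ⟨lt_of_lt_of_le ha hy.1, hy.2⟩
  have hcont : ContinuousOn h (Set.Icc a b) := hh.mono hs
  have hint : IntegrableOn h (Set.uIcc a b) := by
    rw [Set.uIcc_of_le hab]
    exact hcont.integrableOn_compact isCompact_Icc
  have hInt : ∀ t ∈ Set.Icc a b, IntervalIntegrable h volume a t := by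
    intro t ht
    have hcu : ContinuousOn h (Set.uIcc a t) := by
      rw [Set.uIcc_of_le ht.1]
      exact hcont.mono (Set.Icc_subset_Icc le_rfl ht.2)
    exact hcu.intervalIntegrable
  have hb' : IntervalIntegrable h volume a b := by
    have hcu : ContinuousOn h (Set.uIcc a b) := by rwa [Set.uIcc_of_le hab]
    exact hcu.intervalIntegrable
  have hprim := intervalIntegral.continuousOn_primitive_interval hint
  rw [Set.uIcc_of_le hab] at hprim
  exact (continuousOn_const.sub hprim).congr
    (fun t ht => (intervalIntegral.integral_interval_sub_left hb' (hInt t ht)).symm)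

/-- Continuity of `t ↦ ∫_t^b h` on `(0,b]` for `h` continuous on `(0,b]`. -/
lemma volterra_primContIoc {b : ℝ} (h : ℝ → ℝ) (hh : ContinuousOn h (Set.Ioc 0 b)) :
    ContinuousOn (fun t => ∫ y in t..b, h y) (Set.Ioc 0 b) := by
  intro x hx
  have hx2 : 0 < x / 2 := half_pos hx.1
  have hx2b : x / 2 ≤ b := le_trans (by linarith [hx.1]) hx.2
  have hc := volterra_primCont h hh hx2 hx2b x ⟨by linarith [hx.1], hx.2⟩
  apply hc.mono_of_mem_nhdsWithin
  apply mem_nhdsWithin.mpr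
  refine ⟨Set.Ioi (x / 2), isOpen_Ioi, Set.mem_Ioi.mpr (by linarith [hx.1]), ?_⟩
  rintro y ⟨hy1, hy2⟩
  exact ⟨le_of_lt hy1, hy2.2⟩

/-- Derivative of `t ↦ ∫_t^b h` at interior points. -/
lemma volterra_primDeriv {b : ℝ} (h : ℝ → ℝ) (hh : ContinuousOn h (Set.Ioc 0 b))
    {t : ℝ} (ht : t ∈ Set.Ioo 0 b) :
    HasDerivAt (fun u => ∫ y in u..b, h y) (-h t) t := by
  have hsub : Set.uIcc t b ⊆ Set.Ioc 0 b := by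
    rw [Set.uIcc_of_le ht.2.le]
    exact fun y hy => ⟨lt_of_lt_of_le ht.1 hy.1, hy.2⟩
  have hint : IntervalIntegrable h volume t b := (hh.mono hsub).intervalIntegrable
  have hmeas : StronglyMeasurableAtFilter h (nhds t) volume :=
    (hh.mono Set.Ioo_subset_Ioc_self).stronglyMeasurableAtFilter isOpen_Ioo t ht
  have hca : ContinuousAt h t :=
    hh.continuousAt (mem_nhds_iff.mpr ⟨Set.Ioo 0 b, Set.Ioo_subset_Ioc_self, isOpen_Ioo, ht⟩)
  exact intervalIntegral.integral_hasDerivAt_left hint hmeas hca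

/-- Explicit solution of the Volterra-type integral equation
`f x + (N/x) ∫_x^b (f y - g y) dy + c/x = γ x` on `(0,b]`,
where `g` is continuous on `(0,b]` and `γ` is continuously differentiable on `(0,b]`
(with derivative `γ'`).  The function
`f x = x^(N-1) [ (bγ(b) - c)/b^N - ∫_x^b ((yγ(y))')/y^N dy + N ∫_x^b g(y)/y^N dy ]`
is continuous on `(0,b]` and satisfies the equation there. -/
theorem volterra_explicit_solution
    (b c : ℝ) (hb : 0 < b) (N : ℕ) (hN : 1 ≤ N)
    (g γ γ' : ℝ → ℝ)
    (hg : ContinuousOn g (Set.Ioc 0 b))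
    (hγ : ∀ y ∈ Set.Ioc (0 : ℝ) b, HasDerivAt γ (γ' y) y)
    (hγ' : ContinuousOn γ' (Set.Ioc 0 b))
    (f : ℝ → ℝ)
    (hf : ∀ x ∈ Set.Ioc (0 : ℝ) b,
      f x = x ^ (N - 1) *
        ((b * γ b - c) / b ^ N
          - (∫ y in x..b, (γ y + y * γ' y) / y ^ N)
          + N * ∫ y in x..b, g y / y ^ N)) :
    ContinuousOn f (Set.Ioc 0 b) ∧
      ∀ x ∈ Set.Ioc (0 : ℝ) b,
        f x + (N / x) * (∫ y in x..b, (f y - g y)) + c / x = γ x := by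
  have hNpow : N - 1 + 1 = N := Nat.succ_pred_eq_of_pos hN
  have hγc : ContinuousOn γ (Set.Ioc 0 b) :=
    fun y hy => (hγ y hy).continuousAt.continuousWithinAt
  have hpowne : ∀ y ∈ Set.Ioc (0:ℝ) b, y ^ N ≠ 0 :=
    fun y hy => pow_ne_zero _ (ne_of_gt hy.1)
  have h1c : ContinuousOn (fun y => (γ y + y * γ' y) / y ^ N) (Set.Ioc 0 b) :=
    (hγc.add (continuousOn_id.mul hγ')).div (continuousOn_id.pow N) hpowne
  have h2c : ContinuousOn (fun y => g y / y ^ N) (Set.Ioc 0 b) :=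
    hg.div (continuousOn_id.pow N) hpowne
  set F : ℝ → ℝ := fun x => (b * γ b - c) / b ^ N
      - (∫ y in x..b, (γ y + y * γ' y) / y ^ N)
      + N * ∫ y in x..b, g y / y ^ N with hFdef
  have hfF : ∀ x ∈ Set.Ioc (0:ℝ) b, f x = x ^ (N - 1) * F x := hf
  have hFc : ContinuousOn F (Set.Ioc 0 b) := by
    apply ContinuousOn.add
    · exact continuousOn_const.sub (volterra_primContIoc _ h1c)
    · exact continuousOn_const.mul (volterra_primContIoc _ h2c)
  have hfc : ContinuousOn f (Set.Ioc 0 b) :=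
    ContinuousOn.congr ((continuousOn_id.pow (N-1)).mul hFc) hfF
  refine ⟨hfc, ?_⟩
  intro x hx
  have hfg : ContinuousOn (fun y => f y - g y) (Set.Ioc 0 b) := hfc.sub hg
  set φ : ℝ → ℝ := fun z => z ^ N * F z - z * γ z + c
      + N * ∫ y in z..b, (f y - g y) with hφdef
  have hIccsub : Set.Icc x b ⊆ Set.Ioc 0 b :=
    fun y hy => ⟨lt_of_lt_of_le hx.1 hy.1, hy.2⟩
  have hφcont : ContinuousOn φ (Set.Icc x b) := by
    apply ContinuousOn.add
    · apply ContinuousOn.add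
      · exact ((continuousOn_id.pow N).mul (hFc.mono hIccsub)).sub
          (continuousOn_id.mul (hγc.mono hIccsub))
      · exact continuousOn_const
    · exact continuousOn_const.mul (volterra_primCont _ hfg hx.1 hx.2)
  have hφderiv : ∀ t ∈ Set.Ico x b, HasDerivWithinAt φ 0 (Set.Ici t) t := by
    intro t ht
    have ht' : t ∈ Set.Ioo 0 b := ⟨lt_of_lt_of_le hx.1 ht.1, ht.2⟩
    have ht'' : t ∈ Set.Ioc 0 b := ⟨ht'.1, ht'.2.le⟩
    have hI1' := volterra_primDeriv _ h1c ht'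
    have hI2' := volterra_primDeriv _ h2c ht'
    have hu' := volterra_primDeriv _ hfg ht'
    have hF' : HasDerivAt F (0 - (-((γ t + t * γ' t) / t ^ N))
        + (N : ℝ) * (-(g t / t ^ N))) t :=
      ((hasDerivAt_const t _).sub hI1').add (hI2'.const_mul (N : ℝ))
    have hγt := hγ t ht''
    have hxγ : HasDerivAt (fun z => z * γ z) (1 * γ t + t * γ' t) t :=
      (hasDerivAt_id' (x := t)).mul hγt
    have hpow := hasDerivAt_pow N t
    have hD : HasDerivAt φ
        ((((N : ℝ) * t ^ (N - 1) * F t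
            + t ^ N * (0 - (-((γ t + t * γ' t) / t ^ N)) + (N : ℝ) * (-(g t / t ^ N))))
          - (1 * γ t + t * γ' t))
          + (N : ℝ) * (-(f t - g t))) t :=
      (((hpow.mul hF').sub hxγ).add_const c).add (hu'.const_mul (N : ℝ))
    have hzero : (((N : ℝ) * t ^ (N - 1) * F t
            + t ^ N * (0 - (-((γ t + t * γ' t) / t ^ N)) + (N : ℝ) * (-(g t / t ^ N))))
          - (1 * γ t + t * γ' t))
          + (N : ℝ) * (-(f t - g t)) = 0 := by
      have hft := hfF t ht''
      have htne : t ≠ 0 := ne_of_gt ht'.1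
      have htN : t ^ N ≠ 0 := pow_ne_zero _ htne
      rw [hft]
      field_simp
      ring
    rw [hzero] at hD
    exact hD.hasDerivWithinAt
  have hconstφ := constant_of_has_deriv_right_zero hφcont hφderiv b
    (Set.right_mem_Icc.mpr hx.2)
  have hφb : φ b = 0 := by
    have hbN : (b : ℝ) ^ N ≠ 0 := pow_ne_zero _ (ne_of_gt hb)
    simp only [hφdef, hFdef, intervalIntegral.integral_same, mul_zero, sub_zero, add_zero]
    field_simp
    ring
  have hφx : φ x = 0 := by rw [← hconstφ]; exact hφb
  -- final algebra
  have hxne : x ≠ 0 := ne_of_gt hx.1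
  have hxp : x ^ (N - 1) * x = x ^ N := by
    rw [← pow_succ, hNpow]
  have hφx' : x ^ N * F x - x * γ x + c
      + N * ∫ y in x..b, (f y - g y) = 0 := hφx
  rw [hfF x hx]
  field_simp
  linear_combination hφx' + (F x) * hxp
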